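/- Let T be a phylogenetic tree with labeled vertex set L, let G be its distance graph, let R : L → ℕ be an injective ranking, and let M be the vertex-ranked MST of G with respect to R. Then the edge set of M is exactly { {Sg_R(i), Sg_R(j)} : {i,j} ∈ E_T and Sg_R(i) ≠ Sg_R(j) }; equivalently, M is the tree obtained from T by contracting, for every vertex u of T, the path from u to its surrogate vertex Sg_R(u). -/

import Mathlib

open SimpleGraph

/-- The threshold subgraph `G_{≤ t}`: same vertices, only edges of weight `≤ t`. -/
def thresholdGraph {V : Type*} (G : SimpleGraph V) (w : Sym2 V → ℝ) (t : ℝ) :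
    SimpleGraph V where
  Adj u v := G.Adj u v ∧ w s(u, v) ≤ t
  symm := by
    constructor
    intro u v hv
    exact ⟨hv.1.symm, by rw [Sym2.eq_swap]; exact hv.2⟩
  loopless := ⟨fun v hv => G.loopless.irrefl v hv.1⟩

/-- The strict threshold subgraph `G_{< t}`. -/
def strictThresholdGraph {V : Type*} (G : SimpleGraph V) (w : Sym2 V → ℝ) (t : ℝ) :
    SimpleGraph V where
  Adj u v := G.Adj u v ∧ w s(u, v) < t
  symm := by
    constructor
    intro u v hv
    exact ⟨hv.1.symm, by rw [Sym2.eq_swap]; exact hv.2⟩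
  loopless := ⟨fun v hv => G.loopless.irrefl v hv.1⟩

/-- The laminar family of an edge-weighted graph: the whole vertex set together with the
vertex sets of the connected components of every threshold subgraph. -/
def laminarFamily {V : Type*} (G : SimpleGraph V) (w : Sym2 V → ℝ) : Set (Set V) :=
  insert Set.univ
    {S | ∃ (t : ℝ) (C : (thresholdGraph G w t).ConnectedComponent), S = C.supp}

/-- `M` is a spanning tree of `G`. -/
def IsSpanningTree {V : Type*} (G M : SimpleGraph V) : Prop :=
  M ≤ G ∧ M.IsTree

/-- Total weight of (the edges of) a graph. -/
noncomputable def totalWeight {V : Type*} [Finite V] (M : SimpleGraph V)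
    (w : Sym2 V → ℝ) : ℝ :=
  ∑ e ∈ M.edgeSet.toFinite.toFinset, w e

/-- `M` is a minimum spanning tree of `G` with respect to the weights `w`. -/
def IsMST {V : Type*} [Finite V] (G : SimpleGraph V) (w : Sym2 V → ℝ)
    (M : SimpleGraph V) : Prop :=
  IsSpanningTree G M ∧ ∀ M' : SimpleGraph V, IsSpanningTree G M' →
    totalWeight M w ≤ totalWeight M' w

/-- A phylogenetic tree: a finite tree with strictly positive edge lengths and a nonempty
set `L` of labeled vertices, each hidden vertex having degree at least 3. -/
structure PhyloTree (V : Type*) where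
  finV : Finite V
  T : SimpleGraph V
  isTree : T.IsTree
  len : Sym2 V → ℝ
  len_pos : ∀ e ∈ T.edgeSet, 0 < len e
  L : Set V
  L_nonempty : L.Nonempty
  hidden_deg : ∀ v, v ∉ L → 3 ≤ (T.neighborSet v).ncard

namespace PhyloTree

variable {V : Type*}

/-- The unique path between two vertices of the tree. -/
noncomputable def path (P : PhyloTree V) (u v : V) : P.T.Walk u v :=
  (P.isTree.existsUnique_path u v).exists.choose

lemma path_isPath (P : PhyloTree V) (u v : V) : (P.path u v).IsPath :=
  (P.isTree.existsUnique_path u v).exists.choose_spec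

/-- The tree distance: the sum of the edge lengths along the unique path. -/
noncomputable def dist (P : PhyloTree V) (u v : V) : ℝ :=
  ((P.path u v).edges.map P.len).sum

lemma dist_comm (P : PhyloTree V) (u v : V) : P.dist u v = P.dist v u := by
  have h : (P.path u v).reverse = P.path v u :=
    (P.isTree.existsUnique_path v u).unique ((P.path_isPath u v).reverse)
      (P.path_isPath v u)
  unfold dist
  rw [← h, SimpleGraph.Walk.edges_reverse, List.map_reverse, List.sum_reverse]

/-- The tree distance as a symmetric function on unordered pairs. -/
noncomputable def wdist (P : PhyloTree V) : Sym2 V → ℝ :=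
  Sym2.lift ⟨fun u v => P.dist u v, fun u v => P.dist_comm u v⟩

/-- The surrogate set of a vertex: the labeled vertices closest to it. -/
def Sg (P : PhyloTree V) (h : V) : Set V :=
  {l | l ∈ P.L ∧ ∀ l' ∈ P.L, P.dist l h ≤ P.dist l' h}

/-- `s` is the surrogate vertex `Sg_R(h)` of `h` w.r.t. the ranking `R`:
the element of the surrogate set of `h` of smallest `R`-value. -/
def IsSgR (P : PhyloTree V) (R : V → ℕ) (h : V) (s : V) : Prop :=
  s ∈ P.Sg h ∧ ∀ l ∈ P.Sg h, R s ≤ R l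

/-- The edge weights of the distance graph of `P` (the complete graph on `↥P.L`). -/
noncomputable def wG (P : PhyloTree V) : Sym2 ↥P.L → ℝ :=
  fun e => P.wdist (e.map Subtype.val)

/-- An edge `e` of the distance graph lying in at least one MST (i.e. an edge of `g`). -/
def mstEdge (P : PhyloTree V) (e : Sym2 ↥P.L) : Prop :=
  haveI := P.finV
  ∃ M : SimpleGraph ↥P.L, IsMST (⊤ : SimpleGraph ↥P.L) P.wG M ∧ e ∈ M.edgeSet

/-- `δ_max(v)`: the maximum degree of `v` over all MSTs of the distance graph. -/
noncomputable def deltaMax (P : PhyloTree V) (v : ↥P.L) : ℕ :=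
  haveI := P.finV
  sSup {d : ℕ | ∃ M : SimpleGraph ↥P.L,
    IsMST (⊤ : SimpleGraph ↥P.L) P.wG M ∧ d = (M.neighborSet v).ncard}

end PhyloTree

/-- The smaller of the two ranks of the endpoints of an edge. -/
def sym2MinR {α : Type*} (R : α → ℕ) : Sym2 α → ℕ :=
  Sym2.lift ⟨fun a b => min (R a) (R b), fun a b => min_comm _ _⟩

/-- The larger of the two ranks of the endpoints of an edge. -/
def sym2MaxR {α : Type*} (R : α → ℕ) : Sym2 α → ℕ :=
  Sym2.lift ⟨fun a b => max (R a) (R b), fun a b => max_comm _ _⟩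

/-- The strict total order `<_R` on edges: first by weight, then by the smaller rank of
the endpoints, then by the larger rank of the endpoints. -/
def edgeLT {α : Type*} (w : Sym2 α → ℝ) (R : α → ℕ) (e f : Sym2 α) : Prop :=
  w e < w f ∨ (w e = w f ∧ (sym2MinR R e < sym2MinR R f ∨
    (sym2MinR R e = sym2MinR R f ∧ sym2MaxR R e < sym2MaxR R f)))

/-- `M` is the vertex-ranked MST of `G` w.r.t. the ranking `R`: a spanning tree such that
every non-tree edge `{u,v}` of `G` is the `<_R`-greatest edge of the cycle it closes,
i.e. every edge of the `M`-path from `u` to `v` is `<_R`-smaller than `{u,v}`. -/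
def IsVRMST {α : Type*} (G : SimpleGraph α) (w : Sym2 α → ℝ) (R : α → ℕ)
    (M : SimpleGraph α) : Prop :=
  IsSpanningTree G M ∧ ∀ u v : α, G.Adj u v → ¬M.Adj u v →
    ∀ p : M.Walk u v, p.IsPath → ∀ f ∈ p.edges, edgeLT w R f s(u, v)

open List in
theorem sum_map_le_of_nodup_subset {α : Type*} [DecidableEq α] (l1 l2 : List α) (f : α → ℝ)
    (h1 : l1.Nodup) (hsub : l1 ⊆ l2) (h0 : ∀ x ∈ l2, 0 ≤ f x) :
    (l1.map f).sum ≤ (l2.map f).sum := by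
  have e1 : ∀ (l : List α), l.Nodup → (l.map f).sum = ∑ x ∈ l.toFinset, f x := by
    intro l hl
    rw [Finset.sum_list_map_count, Finset.sum_congr rfl (fun x hx => ?_)]
    rw [List.count_eq_one_of_mem hl (List.mem_toFinset.mp hx), one_nsmul]
  have e3 : l2.dedup.toFinset = l2.toFinset := by
    ext x; simp [List.mem_dedup]
  calc (l1.map f).sum = ∑ x ∈ l1.toFinset, f x := e1 l1 h1
    _ ≤ ∑ x ∈ l2.toFinset, f x := Finset.sum_le_sum_of_subset_of_nonneg
        (fun x hx => List.mem_toFinset.mpr (hsub (List.mem_toFinset.mp hx)))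
        (fun i hi _ => h0 i (List.mem_toFinset.mp hi))
    _ = (l2.dedup.map f).sum := by rw [e1 l2.dedup (l2.nodup_dedup), e3]
    _ ≤ (l2.map f).sum := List.Sublist.sum_le_sum ((l2.dedup_sublist).map f)
        (by intro x hx; obtain ⟨a, ha, rfl⟩ := List.mem_map.mp hx; exact h0 a ha)

namespace PhyloTree
variable {V : Type*} (P : PhyloTree V)

lemma path_eq {u v : V} (p : P.T.Walk u v) (hp : p.IsPath) : p = P.path u v :=
  (P.isTree.existsUnique_path u v).unique hp (P.path_isPath u v)

lemma path_self (a : V) : P.path a a = SimpleGraph.Walk.nil :=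
  (P.path_eq SimpleGraph.Walk.nil (SimpleGraph.Walk.IsPath.nil)).symm

lemma dist_self (a : V) : P.dist a a = 0 := by
  unfold dist; rw [path_self]; simp

lemma len_nonneg_of_mem {u v : V} {e : Sym2 V} (he : e ∈ (P.path u v).edges) :
    0 < P.len e :=
  P.len_pos e ((P.path u v).edges_subset_edgeSet he)

lemma dist_nonneg (u v : V) : 0 ≤ P.dist u v := by
  unfold dist
  apply List.sum_nonneg
  intro x hx
  obtain ⟨e, he, rfl⟩ := List.mem_map.mp hx
  exact (P.len_nonneg_of_mem he).le

lemma dist_pos {u v : V} (h : u ≠ v) : 0 < P.dist u v := by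
  unfold dist
  apply List.sum_pos
  · intro x hx
    obtain ⟨e, he, rfl⟩ := List.mem_map.mp hx
    exact P.len_nonneg_of_mem he
  · intro hnil
    apply h
    have h0 : (P.path u v).edges = [] := by
      by_contra hne
      exact hne (List.map_eq_nil_iff.mp hnil)
    have hl : (P.path u v).length = 0 := by
      rw [← SimpleGraph.Walk.length_edges, h0]; rfl
    have hs : (P.path u v).support.length = 1 := by
      rw [SimpleGraph.Walk.length_support, hl]
    obtain ⟨a, ha⟩ := List.length_eq_one_iff.mp hs
    have hu : u ∈ (P.path u v).support := SimpleGraph.Walk.start_mem_support _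
    have hv : v ∈ (P.path u v).support := SimpleGraph.Walk.end_mem_support _
    rw [ha, List.mem_singleton] at hu hv
    rw [hu, hv]

lemma eq_of_dist_eq_zero {u v : V} (h : P.dist u v = 0) : u = v := by
  by_contra hne; exact absurd h (P.dist_pos hne).ne'

lemma dist_split {u w : V} (v : V) (h : v ∈ (P.path u w).support) :
    P.dist u w = P.dist u v + P.dist v w := by
  classical
  have h1 : ((P.path u w).takeUntil v h) = P.path u v :=
    P.path_eq _ ((P.path_isPath u w).takeUntil h)
  have h2 : ((P.path u w).dropUntil v h) = P.path v w :=
    P.path_eq _ ((P.path_isPath u w).dropUntil h)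
  conv_lhs => rw [dist, ← SimpleGraph.Walk.take_spec (P.path u w) h]
  rw [SimpleGraph.Walk.edges_append, List.map_append, List.sum_append, h1, h2]
  rfl

lemma dist_triangle (u v w : V) : P.dist u w ≤ P.dist u v + P.dist v w := by
  classical
  set q := ((P.path u v).append (P.path v w)) with hq
  have hb : q.bypass = P.path u w := P.path_eq _ q.bypass_isPath
  have h1 : P.dist u w = (q.bypass.edges.map P.len).sum := by rw [hb]; rfl
  have h2 : (q.edges.map P.len).sum = P.dist u v + P.dist v w := by
    rw [hq, SimpleGraph.Walk.edges_append, List.map_append, List.sum_append]; rfl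
  rw [h1, ← h2]
  apply sum_map_le_of_nodup_subset _ _ _ q.bypass_isPath.isTrail.edges_nodup
    q.edges_bypass_subset
  intro e he
  exact (P.len_pos e (q.edges_subset_edgeSet he)).le

lemma dist_adj {i j : V} (h : P.T.Adj i j) : P.dist i j = P.len s(i, j) := by
  have : SimpleGraph.Walk.cons h SimpleGraph.Walk.nil = P.path i j := by
    apply P.path_eq
    simp [SimpleGraph.Walk.isPath_def, h.ne]
  rw [dist, ← this]
  simp

end PhyloTree
namespace PhyloTree
variable {V : Type*} (P : PhyloTree V)

/-- `x` is on the `i`-side of the edge `{i,j}`: the path from `x` to `j` passes `i`. -/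
def onSide (i j x : V) : Prop := i ∈ (P.path x j).support

lemma onSide_dist {i j x : V} (hij : P.T.Adj i j) (hx : P.onSide i j x) :
    P.dist x j = P.dist x i + P.len s(i, j) := by
  rw [P.dist_split i hx, P.dist_adj hij]

lemma onSide_of_not_onSide {i j x : V} (hij : P.T.Adj i j) (hx : ¬ P.onSide i j x) :
    P.onSide j i x := by
  classical
  have hpath : (P.path x j).concat hij.symm = P.path x i := by
    apply P.path_eq
    have := (P.path_isPath x j)
    rw [← SimpleGraph.Walk.isPath_reverse_iff, SimpleGraph.Walk.reverse_concat]
    exact (P.path_isPath x j).reverse.cons (by rw [SimpleGraph.Walk.support_reverse]; simpa [onSide] using hx)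
  unfold onSide
  rw [← hpath, SimpleGraph.Walk.support_concat]
  simp [SimpleGraph.Walk.end_mem_support]

lemma not_onSide_dist {i j x : V} (hij : P.T.Adj i j) (hx : ¬ P.onSide i j x) :
    P.dist x i = P.dist x j + P.len s(i, j) := by
  have := P.onSide_dist hij.symm (P.onSide_of_not_onSide hij hx)
  rwa [Sym2.eq_swap] at this

lemma not_onSide_of_onSide {i j x : V} (hij : P.T.Adj i j) (hx : P.onSide i j x) :
    ¬ P.onSide j i x := by
  intro hx2
  have h1 := P.onSide_dist hij hx
  have h2 := P.onSide_dist hij.symm hx2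
  rw [Sym2.eq_swap] at h2
  have hpos := P.len_pos s(i,j) (P.T.mem_edgeSet.mpr hij)
  linarith

lemma onSide_step {i j u v : V} (hij : P.T.Adj i j) (huv : P.T.Adj u v)
    (hne : s(u, v) ≠ s(i, j)) (hu : P.onSide i j u) : P.onSide i j v := by
  classical
  by_cases hc : u ∈ (P.path v j).support
  · have h2 : ((P.path v j).dropUntil u hc) = P.path u j :=
      P.path_eq _ ((P.path_isPath v j).dropUntil hc)
    unfold onSide
    rw [← SimpleGraph.Walk.take_spec (P.path v j) hc]
    apply SimpleGraph.Walk.subset_support_append_right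
    rw [h2]
    exact hu
  · have hpath : SimpleGraph.Walk.cons huv (P.path v j) = P.path u j :=
      P.path_eq _ ((P.path_isPath v j).cons hc)
    have hu' : i ∈ (SimpleGraph.Walk.cons huv (P.path v j)).support := by
      rw [hpath]; exact hu
    rw [SimpleGraph.Walk.support_cons, List.mem_cons] at hu'
    rcases hu' with hu' | hu'
    · -- i = u
      subst hu'
      exfalso
      have hone : SimpleGraph.Walk.cons hij SimpleGraph.Walk.nil = P.path i j := by
        apply P.path_eq
        simp [SimpleGraph.Walk.isPath_def, hij.ne]
      have : SimpleGraph.Walk.cons huv (P.path v j) = SimpleGraph.Walk.cons hij SimpleGraph.Walk.nil := by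
        rw [hpath, hone]
      have hedges := congrArg SimpleGraph.Walk.edges this
      simp only [SimpleGraph.Walk.edges_cons, SimpleGraph.Walk.edges_nil] at hedges
      have h1 : s(i, v) = s(i, j) := (List.cons_eq_cons.mp hedges).1
      exact hne (by rw [← h1])
    · exact hu'

end PhyloTree
namespace PhyloTree
variable {V : Type*} (P : PhyloTree V)

lemma onSide_walk {i j : V} (hij : P.T.Adj i j) {x y : V}
    (w : (P.T.deleteEdges {s(i, j)}).Walk x y) (hx : P.onSide i j x) :
    P.onSide i j y := by
  induction w with
  | nil => exact hx
  | cons h q ih =>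
    rw [SimpleGraph.deleteEdges_adj] at h
    exact ih (P.onSide_step hij h.1 (by simpa using h.2) hx)

lemma cross_edge {i j x y : V} (hij : P.T.Adj i j) (hx : P.onSide i j x)
    (hy : ¬ P.onSide i j y) : s(i, j) ∈ (P.path x y).edges := by
  by_contra he
  have w := (P.path x y).toDeleteEdges {s(i, j)}
    (fun e' he' => by rintro rfl; exact he he')
  exact hy (P.onSide_walk hij w hx)

lemma cross_dist {i j x y : V} (hij : P.T.Adj i j) (hx : P.onSide i j x)
    (hy : ¬ P.onSide i j y) :
    P.dist x y = P.dist x i + P.len s(i, j) + P.dist j y := by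
  have hi : i ∈ (P.path x y).support :=
    (P.path x y).fst_mem_support_of_mem_edges (P.cross_edge hij hx hy)
  rw [P.dist_split i hi]
  have h2 : P.dist i y = P.len s(i, j) + P.dist j y := by
    rw [P.dist_comm i y, P.dist_comm j y, P.not_onSide_dist hij hy]
    ring
  rw [h2]; ring

lemma sg_subset_L (h : V) : P.Sg h ⊆ P.L := fun _ hl => hl.1

lemma sgR_exists (R : V → ℕ) (h : V) : ∃ s, P.IsSgR R h s := by
  haveI := P.finV
  obtain ⟨l0, hl0, hmin⟩ := Set.exists_min_image P.L (fun l => P.dist l h)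
    (Set.toFinite P.L) P.L_nonempty
  have hSg : (P.Sg h).Nonempty := ⟨l0, hl0, hmin⟩
  obtain ⟨s, hs, hsmin⟩ := Set.exists_min_image (P.Sg h) R (Set.toFinite _) hSg
  exact ⟨s, hs, hsmin⟩

lemma isSgR_unique {R : V → ℕ} (hR : Set.InjOn R P.L) {h s s' : V}
    (h1 : P.IsSgR R h s) (h2 : P.IsSgR R h s') : s = s' :=
  hR h1.1.1 h2.1.1 (le_antisymm (h1.2 s' h2.1) (h2.2 s h1.1))

lemma isSgR_self {R : V → ℕ} {l : V} (hl : l ∈ P.L) : P.IsSgR R l l := by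
  refine ⟨⟨hl, fun l' _ => ?_⟩, fun l' hl' => ?_⟩
  · rw [P.dist_self]; exact P.dist_nonneg l' l
  · have h0 : P.dist l' l = 0 :=
      le_antisymm (by simpa [P.dist_self] using hl'.2 l hl) (P.dist_nonneg l' l)
    rw [P.eq_of_dist_eq_zero h0]

/-- The surrogate of `i` lies on the `i`-side of any tree edge `{i,j}`, provided the
surrogates of `i` and `j` differ. -/
lemma surrogate_onSide {R : V → ℕ} (hR : Set.InjOn R P.L) {i j si sj : V}
    (hij : P.T.Adj i j) (hsi : P.IsSgR R i si) (hsj : P.IsSgR R j sj)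
    (hne : si ≠ sj) : P.onSide i j si := by
  by_contra hside
  have hlen := P.len_pos s(i, j) (P.T.mem_edgeSet.mpr hij)
  have hsii : P.dist si i = P.dist si j + P.len s(i, j) := P.not_onSide_dist hij hside
  -- si is in Sg j
  have hsiSgj : si ∈ P.Sg j := by
    refine ⟨hsi.1.1, fun l hl => ?_⟩
    have h1 : P.dist si i ≤ P.dist l i := hsi.1.2 l hl
    by_cases hls : P.onSide i j l
    · have := P.onSide_dist hij hls
      linarith
    · have := P.not_onSide_dist hij hls
      linarith
  -- sj is not on the i-side
  have hsjside : ¬ P.onSide i j sj := by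
    intro hsjA
    have h1 : P.dist sj j ≤ P.dist si j := hsj.1.2 si hsi.1.1
    have h2 := P.onSide_dist hij hsjA
    have h3 : P.dist si i ≤ P.dist sj i := hsi.1.2 sj hsj.1.1
    linarith
  -- sj is in Sg i
  have hsjSgi : sj ∈ P.Sg i := by
    refine ⟨hsj.1.1, fun l hl => ?_⟩
    have h1 : P.dist sj i = P.dist sj j + P.len s(i, j) := P.not_onSide_dist hij hsjside
    have h2 : P.dist sj j ≤ P.dist si j := hsj.1.2 si hsi.1.1
    have h3 : P.dist si i ≤ P.dist l i := hsi.1.2 l hl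
    linarith
  exact hne (hR hsi.1.1 hsj.1.1
    (le_antisymm (hsi.2 sj hsjSgi) (hsj.2 si hsiSgj)))

end PhyloTree
lemma exists_flip {α : Type*} {G : SimpleGraph α} (Q : α → Prop) :
    ∀ {u v : α} (p : G.Walk u v), Q u → ¬ Q v →
      ∃ a b, Q a ∧ ¬ Q b ∧ s(a, b) ∈ p.edges := by
  intro u v p
  induction p with
  | nil => intro h1 h2; exact absurd h1 h2
  | @cons u w v h q ih =>
    intro h1 h2
    by_cases hw : Q w
    · obtain ⟨a, b, ha, hb, hm⟩ := ih hw h2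
      exact ⟨a, b, ha, hb, by simp [hm]⟩
    · exact ⟨u, w, h1, hw, by simp⟩

namespace PhyloTree
variable {V : Type*} (P : PhyloTree V)

lemma wG_pair (a b : ↥P.L) : P.wG s(a, b) = P.dist a.val b.val := rfl

/-- Part 1 : each pair of distinct surrogates of a tree edge is an edge of the VRMST. -/
lemma surrogate_pair_mem {R : V → ℕ} (hR : Set.InjOn R P.L) {M : SimpleGraph ↥P.L}
    (hM : IsVRMST (⊤ : SimpleGraph ↥P.L) P.wG (fun x => R x.val) M)
    {i j si sj : V} (hij : P.T.Adj i j) (hsi : P.IsSgR R i si) (hsj : P.IsSgR R j sj)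
    (hne : si ≠ sj) : M.Adj ⟨si, hsi.1.1⟩ ⟨sj, hsj.1.1⟩ := by
  classical
  by_contra hadj
  set si' : ↥P.L := ⟨si, hsi.1.1⟩
  set sj' : ↥P.L := ⟨sj, hsj.1.1⟩
  have hne' : si' ≠ sj' := fun hc => hne (congrArg Subtype.val hc)
  have hsiA : P.onSide i j si := P.surrogate_onSide hR hij hsi hsj hne
  have hsjA : ¬ P.onSide i j sj :=
    P.not_onSide_of_onSide hij.symm (P.surrogate_onSide hR hij.symm hsj hsi hne.symm)
  obtain ⟨w⟩ := hM.1.2.isConnected.preconnected si' sj'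
  set p := w.toPath
  obtain ⟨a, b, ha, hb, hm⟩ := exists_flip (fun x : ↥P.L => P.onSide i j x.val)
    p.val hsiA hsjA
  have hlt := hM.2 si' sj' hne' hadj p.val p.prop s(a, b) hm
  have hlen := P.len_pos s(i, j) (P.T.mem_edgeSet.mpr hij)
  have hab : P.dist a.val b.val
      = P.dist a.val i + P.len s(i, j) + P.dist j b.val := P.cross_dist hij ha hb
  have hss : P.dist si sj = P.dist si i + P.len s(i, j) + P.dist j sj :=
    P.cross_dist hij hsiA hsjA
  have hia : P.dist si i ≤ P.dist a.val i := hsi.1.2 a.val a.prop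
  have hjb : P.dist sj j ≤ P.dist b.val j := hsj.1.2 b.val b.prop
  have hjb' : P.dist j sj ≤ P.dist j b.val := by
    rw [P.dist_comm j sj, P.dist_comm j b.val]; exact hjb
  have hwf : P.wG s(a, b) = P.dist a.val b.val := rfl
  have hwe : P.wG s(si', sj') = P.dist si sj := rfl
  rcases hlt with hlt | ⟨heq, hrest⟩
  · rw [hwf, hwe] at hlt
    linarith
  · rw [hwf, hwe] at heq
    have e1 : P.dist a.val i = P.dist si i := by linarith
    have e2 : P.dist b.val j = P.dist sj j := by
      have : P.dist j b.val = P.dist j sj := by linarith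
      rw [P.dist_comm b.val j, P.dist_comm sj j, this]
    have haSg : a.val ∈ P.Sg i := ⟨a.prop, fun l hl => by rw [e1]; exact hsi.1.2 l hl⟩
    have hbSg : b.val ∈ P.Sg j := ⟨b.prop, fun l hl => by rw [e2]; exact hsj.1.2 l hl⟩
    have hra : R si ≤ R a.val := hsi.2 a.val haSg
    have hrb : R sj ≤ R b.val := hsj.2 b.val hbSg
    have hminf : sym2MinR (fun x : ↥P.L => R x.val) s(a, b) = min (R a.val) (R b.val) := rfl
    have hmine : sym2MinR (fun x : ↥P.L => R x.val) s(si', sj') = min (R si) (R sj) := rfl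
    have hmaxf : sym2MaxR (fun x : ↥P.L => R x.val) s(a, b) = max (R a.val) (R b.val) := rfl
    have hmaxe : sym2MaxR (fun x : ↥P.L => R x.val) s(si', sj') = max (R si) (R sj) := rfl
    rcases hrest with hlt2 | ⟨heq2, hlt3⟩
    · rw [hminf, hmine] at hlt2; omega
    · rw [hmaxf, hmaxe] at hlt3; omega

end PhyloTree
namespace PhyloTree
variable {V : Type*} (P : PhyloTree V)

/-- A choice of surrogate vertex for every vertex. -/
noncomputable def sgF (R : V → ℕ) (h : V) : V := (P.sgR_exists R h).choose

lemma sgF_spec (R : V → ℕ) (h : V) : P.IsSgR R h (P.sgF R h) :=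
  (P.sgR_exists R h).choose_spec

lemma sgF_mem (R : V → ℕ) (h : V) : P.sgF R h ∈ P.L := (P.sgF_spec R h).1.1

lemma chain {R : V → ℕ} (hR : Set.InjOn R P.L) {M : SimpleGraph ↥P.L}
    (hM : IsVRMST (⊤ : SimpleGraph ↥P.L) P.wG (fun x => R x.val) M) (e : Sym2 ↥P.L) :
    ∀ {x y : V}, P.T.Walk x y →
      (M.deleteEdges {e}).Reachable ⟨P.sgF R x, P.sgF_mem R x⟩ ⟨P.sgF R y, P.sgF_mem R y⟩ ∨
      ∃ u v su sv : V, P.T.Adj u v ∧ P.IsSgR R u su ∧ P.IsSgR R v sv ∧ su ≠ sv ∧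
        e.map Subtype.val = s(su, sv) := by
  intro x y w
  induction w with
  | nil => exact Or.inl (SimpleGraph.Reachable.refl _)
  | @cons u m y h q ih =>
    by_cases hsg : P.sgF R u = P.sgF R m
    · have hq : (⟨P.sgF R u, P.sgF_mem R u⟩ : ↥P.L) = ⟨P.sgF R m, P.sgF_mem R m⟩ :=
        Subtype.ext hsg
      rw [hq]
      exact ih
    · have madj : M.Adj ⟨P.sgF R u, P.sgF_mem R u⟩ ⟨P.sgF R m, P.sgF_mem R m⟩ :=
        P.surrogate_pair_mem hR hM h (P.sgF_spec R u) (P.sgF_spec R m) hsg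
      by_cases hfe : s((⟨P.sgF R u, P.sgF_mem R u⟩ : ↥P.L), ⟨P.sgF R m, P.sgF_mem R m⟩) = e
      · refine Or.inr ⟨u, m, P.sgF R u, P.sgF R m, h, P.sgF_spec R u, P.sgF_spec R m, hsg, ?_⟩
        rw [← hfe, Sym2.map_pair_eq]
      · rcases ih with hre | hr
        · have hadj' : (M.deleteEdges {e}).Adj ⟨P.sgF R u, P.sgF_mem R u⟩
              ⟨P.sgF R m, P.sgF_mem R m⟩ :=
            SimpleGraph.deleteEdges_adj.mpr ⟨madj, by simpa using hfe⟩
          exact Or.inl (hadj'.reachable.trans hre)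
        · exact Or.inr hr

end PhyloTree
/-- the edge set of the vertex-ranked MST of the distance graph consists
exactly of the pairs of distinct surrogates of the endpoints of the edges of `T`. -/
theorem vrmst_edgeSet_eq_surrogate_pairs {V : Type*} (P : PhyloTree V) (R : V → ℕ)
    (hR : Set.InjOn R P.L) (M : SimpleGraph ↥P.L)
    (hM : IsVRMST (⊤ : SimpleGraph ↥P.L) P.wG (fun x => R x.val) M) :
    M.edgeSet = {e : Sym2 ↥P.L | ∃ i j si sj : V, P.T.Adj i j ∧
      P.IsSgR R i si ∧ P.IsSgR R j sj ∧ si ≠ sj ∧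
      e.map Subtype.val = s(si, sj)} := by
  classical
  ext e
  simp only [Set.mem_setOf_eq]
  constructor
  · intro he
    revert he
    refine Sym2.inductionOn e (fun a b => ?_)
    intro he
    have hbr : M.IsBridge s(a, b) :=
      (SimpleGraph.isAcyclic_iff_forall_edge_isBridge.mp hM.1.2.IsAcyclic) he
    have hnr : ¬ (M.deleteEdges {s(a, b)}).Reachable a b :=
      SimpleGraph.isBridge_iff.mp hbr
    rcases P.chain hR hM s(a, b) (P.path a.val b.val) with hre | hr
    · exfalso
      have ha : P.sgF R a.val = a.val :=
        P.isSgR_unique hR (P.sgF_spec R a.val) (P.isSgR_self a.prop)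
      have hb : P.sgF R b.val = b.val :=
        P.isSgR_unique hR (P.sgF_spec R b.val) (P.isSgR_self b.prop)
      have ha' : (⟨P.sgF R a.val, P.sgF_mem R a.val⟩ : ↥P.L) = a := Subtype.ext ha
      have hb' : (⟨P.sgF R b.val, P.sgF_mem R b.val⟩ : ↥P.L) = b := Subtype.ext hb
      rw [ha', hb'] at hre
      exact hnr hre
    · exact hr
  · rintro ⟨i, j, si, sj, hij, hsi, hsj, hne, hmap⟩
    have he : e = s((⟨si, hsi.1.1⟩ : ↥P.L), ⟨sj, hsj.1.1⟩) := by
      apply Sym2.map.injective Subtype.val_injective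
      rw [hmap, Sym2.map_pair_eq]
    rw [he]
    exact P.surrogate_pair_mem hR hM hij hsi hsj hne
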